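/- Let (X, 𝒜, ν) be a σ-finite measure space, (Θ, d) a compact metric space, and {p_η}_{η ∈ Θ} a jointly measurable family of strictly positive probability densities with respect to ν; write P_η for the measure with density p_η and fix η_0 ∈ Θ. Assume: (i) for ν-almost every x, the map η ↦ log p_η(x) is continuous on Θ; (ii) there is a measurable envelope G with sup_{η ∈ Θ} |log p_η(x)| ≤ G(x) for ν-a.e. x and ∫ G·p_{η_0} dν < ∞; (iii) identifiability: KL(P_{η_0}, P_η) = 0 implies d(η, η_0) = 0; and (iv) the prior Π is a Borel probability measure on Θ with Π(B(η_0, δ)) > 0 for every δ > 0. Let D_1, D_2, … be i.i.d. with law P_{η_0} and define the posterior Π(A | D_{1:L}) = (∫_A ∏_{ℓ=1}^L p_η(D_ℓ) dΠ(η)) / (∫_Θ ∏_{ℓ=1}^L p_η(D_ℓ) dΠ(η)). Then for every ε > 0, the random variable Π({η : d(η, η_0) > ε} | D_{1:L}) converges to 0 in P_{η_0}-probability as L → ∞. -/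

import Mathlib

open MeasureTheory Filter
open scoped ENNReal

open Classical in
/-- Kullback–Leibler divergence `KL(P,Q) = ∫ log(dP/dQ) dP` if `P ≪ Q`, and `+∞` otherwise. -/
noncomputable def klDiv' {X : Type*} [MeasurableSpace X] (P Q : Measure X) : ℝ≥0∞ :=
  if P ≪ Q then ENNReal.ofReal (∫ x, Real.log ((P.rnDeriv Q x).toReal) ∂P) else ⊤

/-- The posterior mass of a set `A ⊆ Θ` given the first `L` observations:
`Π(A | D_{1:L}) = (∫_A ∏_{ℓ<L} p_η(D_ℓ) dΠ(η)) / (∫_Θ ∏_{ℓ<L} p_η(D_ℓ) dΠ(η))`. -/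
noncomputable def posteriorMass {X Θ Ω : Type*} [MeasurableSpace X] [MeasurableSpace Θ]
    (p : Θ → X → ℝ) (prior : Measure Θ) (D : ℕ → Ω → X) (L : ℕ) (ω : Ω) (A : Set Θ) :
    ℝ≥0∞ :=
  (∫⁻ η in A, ∏ ℓ ∈ Finset.range L, ENNReal.ofReal (p η (D ℓ ω)) ∂prior) /
    (∫⁻ η, ∏ ℓ ∈ Finset.range L, ENNReal.ofReal (p η (D ℓ ω)) ∂prior)


/-- SLLN for iid functionals of the data. -/
lemma aux_slln {X Ω : Type*} [MeasurableSpace X] [MeasurableSpace Ω]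
    (μΩ : Measure Ω) [IsProbabilityMeasure μΩ] (P₀ : Measure X)
    (D : ℕ → Ω → X) (hDmeas : ∀ ℓ, Measurable (D ℓ))
    (hindep : ProbabilityTheory.iIndepFun D μΩ)
    (hid : ∀ ℓ, Measure.map (D ℓ) μΩ = P₀)
    (g : X → ℝ) (hg : Measurable g) (hgint : Integrable g P₀) :
    ∀ᵐ ω ∂μΩ, Tendsto (fun L : ℕ => (L : ℝ)⁻¹ * ∑ ℓ ∈ Finset.range L, g (D ℓ ω))
      atTop (nhds (∫ x, g x ∂P₀)) := by
  have hint : Integrable (g ∘ D 0) μΩ := by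
    have := (integrable_map_measure (by rw [hid 0]; exact hg.aestronglyMeasurable)
      (hDmeas 0).aemeasurable (f := D 0) (g := g)).mp (by rw [hid 0]; exact hgint)
    exact this
  have hindep' : Pairwise (Function.onFun (ProbabilityTheory.IndepFun · · μΩ) fun ℓ => g ∘ D ℓ) := by
    intro i j hij
    exact (hindep.comp (fun _ => g) (fun _ => hg)).indepFun hij
  have hident : ∀ i, ProbabilityTheory.IdentDistrib (g ∘ D i) (g ∘ D 0) μΩ μΩ := by
    intro i
    refine ⟨(hg.comp (hDmeas i)).aemeasurable, (hg.comp (hDmeas 0)).aemeasurable, ?_⟩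
    rw [← Measure.map_map hg (hDmeas i), ← Measure.map_map hg (hDmeas 0), hid i, hid 0]
  have hmean : (∫ ω, (g ∘ D 0) ω ∂μΩ) = ∫ x, g x ∂P₀ := by
    rw [← hid 0, integral_map (hDmeas 0).aemeasurable (by rw [hid 0]; exact hg.aestronglyMeasurable)]
    rfl
  filter_upwards [ProbabilityTheory.strong_law_ae _ hint hindep' hident] with ω hω
  rw [hmean] at hω
  simpa [smul_eq_mul] using hω

/-- Tangent-line Jensen: `∫ exp f ≥ c · exp(c⁻¹ ∫ f)` over a finite measure of total mass `c`. -/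
lemma aux_jensen_exp {Θ : Type*} [MeasurableSpace Θ] (μ : Measure Θ) [IsFiniteMeasure μ]
    (f : Θ → ℝ) (hfi : Integrable f μ) (hefi : Integrable (fun η => Real.exp (f η)) μ)
    (hμ : μ Set.univ ≠ 0) :
    (μ Set.univ).toReal * Real.exp ((μ Set.univ).toReal⁻¹ * ∫ η, f η ∂μ)
      ≤ ∫ η, Real.exp (f η) ∂μ := by
  set c : ℝ := (μ Set.univ).toReal with hc
  have hcpos : 0 < c := ENNReal.toReal_pos hμ (measure_ne_top _ _)
  set a : ℝ := c⁻¹ * ∫ η, f η ∂μ with ha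
  have key : ∀ η, Real.exp a * ((f η - a) + 1) ≤ Real.exp (f η) := by
    intro η
    have := Real.add_one_le_exp (f η - a)
    calc Real.exp a * ((f η - a) + 1) ≤ Real.exp a * Real.exp (f η - a) := by
          exact mul_le_mul_of_nonneg_left this (Real.exp_nonneg a)
      _ = Real.exp (f η) := by rw [← Real.exp_add]; ring_nf
  have hint : Integrable (fun η => Real.exp a * ((f η - a) + 1)) μ :=
    (((hfi.sub (integrable_const a)).add (integrable_const 1)).const_mul _)
  have := integral_mono hint hefi key
  have h1 : ∫ η, (f η - a + 1) ∂μ = c := by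
    have e1 : ∫ η, (f η - a + 1) ∂μ = ∫ η, (f η + (1 - a)) ∂μ := by
      apply integral_congr_ae; filter_upwards with η; ring
    rw [e1, integral_add hfi (integrable_const _), integral_const]
    simp only [smul_eq_mul]
    rw [ha]
    field_simp
    rw [measureReal_def, ← hc]; ring
  calc c * Real.exp a = ∫ η, Real.exp a * ((f η - a) + 1) ∂μ := by
        rw [integral_const_mul, h1]; ring
    _ ≤ ∫ η, Real.exp (f η) ∂μ := this

/-- Gibbs' inequality, strict form: if `P_e ≠ P₀` then `∫ log(pe/p₀) dP₀ < 0`. -/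
lemma aux_gibbs {X : Type*} [MeasurableSpace X] (ν : Measure X)
    (p₀ pe : X → ℝ) (hm0 : Measurable p₀) (hme : Measurable pe)
    (hpos0 : ∀ x, 0 < p₀ x) (hpose : ∀ x, 0 < pe x)
    (hprobe : ∫⁻ x, ENNReal.ofReal (pe x) ∂ν = 1)
    [IsProbabilityMeasure (ν.withDensity fun x => ENNReal.ofReal (p₀ x))]
    (hint : Integrable (fun x => Real.log (pe x) - Real.log (p₀ x))
      (ν.withDensity fun x => ENNReal.ofReal (p₀ x)))
    (hne : ν.withDensity (fun x => ENNReal.ofReal (pe x))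
      ≠ ν.withDensity (fun x => ENNReal.ofReal (p₀ x))) :
    ∫ x, (Real.log (pe x) - Real.log (p₀ x))
      ∂(ν.withDensity fun x => ENNReal.ofReal (p₀ x)) < 0 := by
  set P₀ : Measure X := ν.withDensity fun x => ENNReal.ofReal (p₀ x) with hP₀
  set r : X → ℝ := fun x => pe x / p₀ x with hr
  have hrpos : ∀ x, 0 < r x := fun x => div_pos (hpose x) (hpos0 x)
  have hrmeas : Measurable r := hme.div hm0
  have hlogr : ∀ x, Real.log (r x) = Real.log (pe x) - Real.log (p₀ x) := fun x =>
    Real.log_div (ne_of_gt (hpose x)) (ne_of_gt (hpos0 x))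
  have key : ∫⁻ x, ENNReal.ofReal (r x) ∂P₀ = 1 := by
    rw [hP₀, lintegral_withDensity_eq_lintegral_mul ν
      hm0.ennreal_ofReal hrmeas.ennreal_ofReal]
    rw [← hprobe]
    congr 1
    funext x
    simp only [Pi.mul_apply, Function.comp_apply]
    rw [← ENNReal.ofReal_mul (le_of_lt (hpos0 x))]
    congr 1
    rw [hr, mul_comm]
    exact div_mul_cancel₀ _ (ne_of_gt (hpos0 x))
  have hrint : Integrable r P₀ := by
    refine ⟨hrmeas.aestronglyMeasurable, ?_⟩
    rw [hasFiniteIntegral_iff_ofReal (ae_of_all _ fun x => le_of_lt (hrpos x)), key]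
    exact ENNReal.one_lt_top
  have hrI : ∫ x, r x ∂P₀ = 1 := by
    rw [integral_eq_lintegral_of_nonneg_ae (ae_of_all _ fun x => le_of_lt (hrpos x))
      hrmeas.aestronglyMeasurable, key, ENNReal.toReal_one]
  have hle : ∀ x, Real.log (pe x) - Real.log (p₀ x) ≤ r x - 1 := by
    intro x
    rw [← hlogr]
    exact Real.log_le_sub_one_of_pos (hrpos x)
  have hIle : ∫ x, (Real.log (pe x) - Real.log (p₀ x)) ∂P₀ ≤ 0 := by
    have := integral_mono hint (hrint.sub (integrable_const 1)) hle
    have h2 : ∫ x, (r x - 1) ∂P₀ = 0 := by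
      rw [integral_sub hrint (integrable_const 1), hrI, integral_const]
      simp
    linarith [this, h2.symm ▸ this]
  rcases lt_or_eq_of_le hIle with h | h
  · exact h
  · -- equality case: pe = p₀ a.e., contradiction with hne
    exfalso
    have hsub1 : Integrable (fun x => r x - 1) P₀ := hrint.sub (integrable_const 1)
    have hzero : ∫ x, ((r x - 1) - (Real.log (pe x) - Real.log (p₀ x))) ∂P₀ = 0 := by
      rw [integral_sub hsub1 hint]
      rw [integral_sub hrint (integrable_const 1), hrI, integral_const, h]
      simp
    have hnonneg : 0 ≤ᵐ[P₀] fun x => (r x - 1) - (Real.log (pe x) - Real.log (p₀ x)) :=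
      ae_of_all _ fun x => by have := hle x; simp; linarith
    have hintd : Integrable (fun x => (r x - 1) - (Real.log (pe x) - Real.log (p₀ x))) P₀ :=
      hsub1.sub hint
    have haez : (fun x => (r x - 1) - (Real.log (pe x) - Real.log (p₀ x))) =ᵐ[P₀] 0 :=
      (integral_eq_zero_iff_of_nonneg_ae hnonneg hintd).mp hzero
    have haer : ∀ᵐ x ∂P₀, pe x = p₀ x := by
      filter_upwards [haez] with x hx
      simp only [Pi.zero_apply] at hx
      have hlr : Real.log (r x) = r x - 1 := by rw [hlogr]; linarith
      have hr1 : r x = 1 := by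
        by_contra hne1
        have hlne : Real.log (r x) ≠ 0 := by
          intro h0
          rcases Real.log_eq_zero.mp h0 with h' | h' | h'
          · exact absurd h' (ne_of_gt (hrpos x))
          · exact hne1 h'
          · linarith [hrpos x]
        have := Real.add_one_lt_exp hlne
        rw [Real.exp_log (hrpos x)] at this
        linarith
      exact (div_eq_one_iff_eq (ne_of_gt (hpos0 x))).mp hr1
    have hνac : ν ≪ P₀ := by
      rw [hP₀]
      exact withDensity_absolutelyContinuous' hm0.ennreal_ofReal.aemeasurable
        (ae_of_all _ fun x => (ENNReal.ofReal_pos.mpr (hpos0 x)).ne')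
    have haer' : ∀ᵐ x ∂ν, pe x = p₀ x := hνac.ae_le haer
    apply hne
    apply withDensity_congr_ae
    filter_upwards [haer'] with x hx
    rw [hx]

/-- Bracketing: around any parameter with negative mean log-ratio there is a ball and a
measurable integrable envelope of the log-ratios over the ball with negative mean. -/
lemma aux_bracket {X Θ : Type*} [MeasurableSpace X] [MetricSpace Θ] [CompactSpace Θ] [MeasurableSpace Θ]
    (P₀ : Measure X) [IsProbabilityMeasure P₀]
    (ℓd : Θ → X → ℝ) (hjm : Measurable fun q : Θ × X => ℓd q.1 q.2)
    (hcont : ∀ᵐ x ∂P₀, Continuous fun η => ℓd η x)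
    (Gb : X → ℝ) (hGb : Integrable Gb P₀)
    (hdom : ∀ᵐ x ∂P₀, ∀ η, |ℓd η x| ≤ Gb x)
    (η' : Θ) (hI : ∫ x, ℓd η' x ∂P₀ < 0) :
    ∃ (ψ : X → ℝ) (δ : ℝ), 0 < δ ∧ Measurable ψ ∧ Integrable ψ P₀ ∧
      (∫ x, ψ x ∂P₀ < 0) ∧ (∀ᵐ x ∂P₀, ∀ η ∈ Metric.ball η' δ, ℓd η x ≤ ψ x) := by
  haveI : Nonempty Θ := ⟨η'⟩
  haveI : TopologicalSpace.SeparableSpace Θ := by infer_instance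
  set u : ℕ → Θ := TopologicalSpace.denseSeq Θ with hu
  have hdense : DenseRange u := TopologicalSpace.denseRange_denseSeq Θ
  have hmeas1 : ∀ η : Θ, Measurable fun x => ℓd η x := fun η =>
    hjm.comp (measurable_const.prodMk measurable_id)
  -- the radius-`1/(n+1)` suprema
  set ψn : ℕ → X → ℝ := fun n x =>
    ⨆ m : {m : ℕ // u m ∈ Metric.ball η' (1 / (n + 1 : ℝ))}, ℓd (u m) x with hψn
  have hrpos : ∀ n : ℕ, (0 : ℝ) < 1 / (n + 1 : ℝ) := fun n => by positivity
  have hSne : ∀ n : ℕ, Nonempty {m : ℕ // u m ∈ Metric.ball η' (1 / (n + 1 : ℝ))} := by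
    intro n
    obtain ⟨m, hm⟩ := hdense.exists_mem_open Metric.isOpen_ball
      ⟨η', Metric.mem_ball_self (hrpos n)⟩
    exact ⟨⟨m, hm⟩⟩
  have hψmeas : ∀ n, Measurable (ψn n) := fun n =>
    Measurable.iSup fun m => hmeas1 (u m)
  -- pointwise facts on the good set
  have hgood : ∀ᵐ x ∂P₀, (Continuous fun η => ℓd η x) ∧ ∀ η, |ℓd η x| ≤ Gb x :=
    hcont.and hdom
  have hbdd : ∀ x, (∀ η, |ℓd η x| ≤ Gb x) → ∀ n : ℕ,
      BddAbove (Set.range fun m : {m : ℕ // u m ∈ Metric.ball η' (1 / (n + 1 : ℝ))} =>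
        ℓd (u m) x) := by
    intro x hx n
    exact ⟨Gb x, by rintro _ ⟨m, rfl⟩; exact (abs_le.mp (hx _)).2⟩
  have hup : ∀ x, (Continuous fun η => ℓd η x) → (∀ η, |ℓd η x| ≤ Gb x) →
      ∀ n : ℕ, ∀ η ∈ Metric.ball η' (1 / (n + 1 : ℝ)), ℓd η x ≤ ψn n x := by
    intro x hcx hdx n η hη
    refine le_of_forall_pos_le_add fun ρ hρ => ?_
    have hcη : ContinuousAt (fun η => ℓd η x) η := hcx.continuousAt
    obtain ⟨s, hs, hball⟩ := Metric.continuousAt_iff.mp hcη ρ hρ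
    have hV : IsOpen (Metric.ball η s ∩ Metric.ball η' (1 / (n + 1 : ℝ))) :=
      Metric.isOpen_ball.inter Metric.isOpen_ball
    obtain ⟨m, hm⟩ := hdense.exists_mem_open hV
      ⟨η, Metric.mem_ball_self hs, hη⟩
    have h1 : |ℓd (u m) x - ℓd η x| < ρ := by
      have := hball (show dist (u m) η < s from hm.1)
      rwa [Real.dist_eq] at this
    have h2 : ℓd (u m) x ≤ ψn n x :=
      le_ciSup (hbdd x hdx n) (⟨m, hm.2⟩ :
        {m : ℕ // u m ∈ Metric.ball η' (1 / (n + 1 : ℝ))})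
    have := abs_lt.mp h1
    linarith [this.1]
  have habs : ∀ x, (∀ η, |ℓd η x| ≤ Gb x) → ∀ n : ℕ, |ψn n x| ≤ Gb x := by
    intro x hdx n
    haveI := hSne n
    rw [abs_le]
    constructor
    · obtain ⟨m⟩ := hSne n
      have h1 : ℓd (u m) x ≤ ψn n x := le_ciSup (hbdd x hdx n) m
      have := abs_le.mp (hdx (u m.1))
      linarith [this.1]
    · exact ciSup_le fun m => (abs_le.mp (hdx _)).2
  have htend : ∀ x, (Continuous fun η => ℓd η x) → (∀ η, |ℓd η x| ≤ Gb x) →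
      Tendsto (fun n => ψn n x) atTop (nhds (ℓd η' x)) := by
    intro x hcx hdx
    rw [Metric.tendsto_atTop]
    intro ρ hρ
    obtain ⟨s, hs, hball⟩ := Metric.continuousAt_iff.mp hcx.continuousAt (ρ / 2) (by linarith)
    obtain ⟨N, hN⟩ := exists_nat_one_div_lt hs
    refine ⟨N, fun n hn => ?_⟩
    have hrad : (1 : ℝ) / (n + 1) ≤ 1 / (N + 1) := by
      apply one_div_le_one_div_of_le (by positivity)
      exact_mod_cast by omega
    have hsub : Metric.ball η' (1 / (n + 1 : ℝ)) ⊆ Metric.ball η' s :=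
      Metric.ball_subset_ball (le_of_lt (lt_of_le_of_lt hrad hN))
    haveI := hSne n
    have hub : ψn n x ≤ ℓd η' x + ρ / 2 := by
      apply ciSup_le
      intro m
      have hmem : (u m.1) ∈ Metric.ball η' s := hsub m.2
      have := hball (show dist (u m.1) η' < s from hmem)
      rw [Real.dist_eq] at this
      linarith [(abs_lt.mp this).1, (abs_lt.mp this).2]
    have hlb : ℓd η' x ≤ ψn n x :=
      hup x hcx hdx n η' (Metric.mem_ball_self (hrpos n))
    rw [Real.dist_eq, abs_lt]
    constructor <;> [linarith; linarith]
  have hψint : ∀ n, Integrable (ψn n) P₀ := by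
    intro n
    refine Integrable.mono' hGb (hψmeas n).aestronglyMeasurable ?_
    filter_upwards [hdom] with x hx
    rw [Real.norm_eq_abs]
    exact habs x hx n
  have hDCT : Tendsto (fun n => ∫ x, ψn n x ∂P₀) atTop (nhds (∫ x, ℓd η' x ∂P₀)) := by
    apply tendsto_integral_of_dominated_convergence Gb
      (fun n => (hψmeas n).aestronglyMeasurable) hGb
    · intro n
      filter_upwards [hdom] with x hx
      rw [Real.norm_eq_abs]
      exact habs x hx n
    · filter_upwards [hgood] with x hx
      exact htend x hx.1 hx.2
  have : ∀ᶠ n in atTop, ∫ x, ψn n x ∂P₀ < 0 := hDCT.eventually_lt_const hI |>.mono fun n h => h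
  obtain ⟨n, hn⟩ := this.exists
  refine ⟨ψn n, 1 / (n + 1 : ℝ), hrpos n, hψmeas n, hψint n, hn, ?_⟩
  filter_upwards [hgood] with x hx
  exact hup x hx.1 hx.2 n

/-- Continuity of the mean log-ratio at the truth: the mean is `> -β` on a small ball. -/
lemma aux_cont_at {X Θ : Type*} [MeasurableSpace X] [MetricSpace Θ] [MeasurableSpace Θ]
    (P₀ : Measure X) [IsProbabilityMeasure P₀]
    (ℓd : Θ → X → ℝ) (hjm : Measurable fun q : Θ × X => ℓd q.1 q.2)
    (hcont : ∀ᵐ x ∂P₀, Continuous fun η => ℓd η x)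
    (Gb : X → ℝ) (hGb : Integrable Gb P₀)
    (hdom : ∀ᵐ x ∂P₀, ∀ η, |ℓd η x| ≤ Gb x)
    (η₀ : Θ) (h0 : ∀ x, ℓd η₀ x = 0)
    (β : ℝ) (hβ : 0 < β) :
    ∃ δ : ℝ, 0 < δ ∧ ∀ η ∈ Metric.ball η₀ δ, -β < ∫ x, ℓd η x ∂P₀ := by
  have hmeas1 : ∀ η : Θ, Measurable fun x => ℓd η x := fun η =>
    hjm.comp (measurable_const.prodMk measurable_id)
  by_contra hcon
  push_neg at hcon
  have hch : ∀ j : ℕ, ∃ η, η ∈ Metric.ball η₀ (1 / (j + 1 : ℝ)) ∧ ∫ x, ℓd η x ∂P₀ ≤ -β := by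
    intro j
    obtain ⟨η, hη1, hη2⟩ := hcon (1 / (j + 1 : ℝ)) (by positivity)
    exact ⟨η, hη1, hη2⟩
  choose ηj hηj1 hηj2 using hch
  have hηjtend : Tendsto ηj atTop (nhds η₀) := by
    rw [tendsto_iff_dist_tendsto_zero]
    apply squeeze_zero (fun j => dist_nonneg) (fun j => le_of_lt (hηj1 j))
    have : Tendsto (fun j : ℕ => 1 / (j + 1 : ℝ)) atTop (nhds 0) :=
      tendsto_one_div_add_atTop_nhds_zero_nat
    exact this
  have hDCT : Tendsto (fun j => ∫ x, ℓd (ηj j) x ∂P₀) atTop (nhds (∫ x, ℓd η₀ x ∂P₀)) := by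
    apply tendsto_integral_of_dominated_convergence Gb
      (fun j => (hmeas1 (ηj j)).aestronglyMeasurable) hGb
    · intro j
      filter_upwards [hdom] with x hx
      rw [Real.norm_eq_abs]
      exact hx _
    · filter_upwards [hcont] with x hx
      exact (hx.continuousAt.tendsto.comp hηjtend)
  have hz : ∫ x, ℓd η₀ x ∂P₀ = 0 := by simp [h0]
  rw [hz] at hDCT
  have : (0 : ℝ) ≤ -β := le_of_tendsto hDCT (Eventually.of_forall hηj2)
  linarith

/-- Posterior consistency: under a continuous, boundedly dominated, identifiable model on a
compact metric parameter space, with a prior charging all balls around the truth, the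
posterior mass of `{η : d(η, η₀) > ε}` converges to `0` in `P_{η₀}`-probability. -/
theorem posterior_consistency
    {X : Type*} [MeasurableSpace X] (ν : Measure X) [SigmaFinite ν]
    {Θ : Type*} [MetricSpace Θ] [CompactSpace Θ] [MeasurableSpace Θ] [BorelSpace Θ]
    (p : Θ → X → ℝ)
    (hjm : Measurable fun q : Θ × X => p q.1 q.2)
    (hpos : ∀ η x, 0 < p η x)
    (hprob : ∀ η, ∫⁻ x, ENNReal.ofReal (p η x) ∂ν = 1)
    (η₀ : Θ)
    -- (i) a.e. continuity of the log-densities in the parameter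
    (hcont : ∀ᵐ x ∂ν, Continuous fun η : Θ => Real.log (p η x))
    -- (ii) integrable envelope for the log-densities
    (G : X → ℝ)
    (hGint : Integrable G (ν.withDensity fun x => ENNReal.ofReal (p η₀ x)))
    (hGdom : ∀ᵐ x ∂ν, ∀ η : Θ, |Real.log (p η x)| ≤ G x)
    -- (iii) identifiability
    (hident : ∀ η : Θ,
      klDiv' (ν.withDensity fun x => ENNReal.ofReal (p η₀ x))
        (ν.withDensity fun x => ENNReal.ofReal (p η x)) = 0 → dist η η₀ = 0)
    -- (iv) the prior charges every ball around the truth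
    (prior : Measure Θ) [IsProbabilityMeasure prior]
    (hprior : ∀ δ > (0 : ℝ), 0 < prior (Metric.ball η₀ δ))
    -- i.i.d. data with law `P_{η₀}`
    {Ω : Type*} [MeasurableSpace Ω] (μΩ : Measure Ω) [IsProbabilityMeasure μΩ]
    (D : ℕ → Ω → X) (hDmeas : ∀ ℓ, Measurable (D ℓ))
    (hindep : ProbabilityTheory.iIndepFun D μΩ)
    (hid : ∀ ℓ, Measure.map (D ℓ) μΩ = ν.withDensity fun x => ENNReal.ofReal (p η₀ x)) :
    ∀ ε > (0 : ℝ), ∀ c > (0 : ℝ),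
      Tendsto (fun L : ℕ =>
          μΩ {ω | ENNReal.ofReal c ≤
            posteriorMass p prior D L ω {η : Θ | ε < dist η η₀}})
        atTop (nhds 0) := by
  classical
  intro ε hε c hc
  set P₀ : Measure X := ν.withDensity fun x => ENNReal.ofReal (p η₀ x) with hP₀def
  haveI hP₀prob : IsProbabilityMeasure P₀ := ⟨by
    rw [hP₀def, withDensity_apply _ MeasurableSet.univ, setLIntegral_univ, hprob η₀]⟩
  have hac : P₀ ≪ ν := withDensity_absolutelyContinuous _ _
  have hmeasp : ∀ η : Θ, Measurable fun x => p η x := fun η =>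
    hjm.comp (measurable_const.prodMk measurable_id)
  set ℓd : Θ → X → ℝ := fun η x => Real.log (p η x) - Real.log (p η₀ x) with hℓddef
  have hjmld : Measurable fun q : Θ × X => ℓd q.1 q.2 :=
    (Real.measurable_log.comp hjm).sub
      ((Real.measurable_log.comp (hmeasp η₀)).comp measurable_snd)
  have hmeasld : ∀ η : Θ, Measurable fun x => ℓd η x := fun η =>
    hjmld.comp (measurable_const.prodMk measurable_id)
  have hcontP : ∀ᵐ x ∂P₀, Continuous fun η : Θ => ℓd η x := by
    refine hac.ae_le ?_
    filter_upwards [hcont] with x hx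
    exact hx.sub continuous_const
  set Gb : X → ℝ := fun x => 2 * G x with hGbdef
  have hGbint : Integrable Gb P₀ := by
    simp only [hGbdef]; exact hGint.const_mul 2
  have hdomP : ∀ᵐ x ∂P₀, ∀ η : Θ, |ℓd η x| ≤ Gb x := by
    refine hac.ae_le ?_
    filter_upwards [hGdom] with x hx η
    have h1 := hx η
    have h2 := hx η₀
    have h3 : |Real.log (p η x) - Real.log (p η₀ x)|
        ≤ |Real.log (p η x)| + |Real.log (p η₀ x)| := by
      rw [sub_eq_add_neg]
      refine (abs_add_le _ _).trans ?_
      rw [abs_neg]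
    simp only [hℓddef, hGbdef]
    linarith
  have h0ld : ∀ x, ℓd η₀ x = 0 := fun x => sub_self _
  have hldint : ∀ η : Θ, Integrable (fun x => ℓd η x) P₀ := by
    intro η
    refine Integrable.mono' hGbint (hmeasld η).aestronglyMeasurable ?_
    filter_upwards [hdomP] with x hx
    rw [Real.norm_eq_abs]; exact hx η
  have hIneg : ∀ η : Θ, ε ≤ dist η η₀ → ∫ x, ℓd η x ∂P₀ < 0 := by
    intro η hηd
    have hne : ν.withDensity (fun x => ENNReal.ofReal (p η x)) ≠ P₀ := by
      intro heq
      have hone : ∫ x, Real.log ((P₀.rnDeriv P₀ x).toReal) ∂P₀ = 0 := by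
        have h1 : ∀ᵐ x ∂P₀, Real.log ((P₀.rnDeriv P₀ x).toReal)
            = Real.log ((1 : ℝ≥0∞).toReal) := by
          filter_upwards [Measure.rnDeriv_self P₀] with x hx; rw [hx]
        rw [integral_congr_ae h1]; simp
      have hkl : klDiv' P₀ (ν.withDensity fun x => ENNReal.ofReal (p η x)) = 0 := by
        rw [heq]
        simp only [klDiv', if_pos (Measure.AbsolutelyContinuous.rfl (μ := P₀)), hone,
          ENNReal.ofReal_zero]
      have hd0 := hident η hkl
      rw [hd0] at hηd; linarith
    exact aux_gibbs ν (fun x => p η₀ x) (fun x => p η x) (hmeasp η₀) (hmeasp η)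
      (hpos η₀) (hpos η) (hprob η) (hldint η) hne
  set A : Set Θ := {η : Θ | ε < dist η η₀} with hAdef
  rcases em (∃ η : Θ, ε ≤ dist η η₀) with hCne | hCne
  · -- main case
    obtain ⟨ηw, hηw⟩ := hCne
    set C : Set Θ := {η : Θ | ε ≤ dist η η₀} with hCdef
    have hCcomp : IsCompact C :=
      (isClosed_le continuous_const (continuous_id.dist continuous_const)).isCompact
    have hηwC : ηw ∈ C := hηw
    have hbr : ∀ ηc : C, ∃ (ψ : X → ℝ) (δ : ℝ), 0 < δ ∧ Measurable ψ ∧ Integrable ψ P₀ ∧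
        (∫ x, ψ x ∂P₀ < 0) ∧ (∀ᵐ x ∂P₀, ∀ η ∈ Metric.ball (ηc : Θ) δ, ℓd η x ≤ ψ x) :=
      fun ηc => aux_bracket P₀ ℓd hjmld hcontP Gb hGbint hdomP ηc (hIneg ηc ηc.2)
    choose ψf δf hδpos hψmeas hψint hψneg hψdom using hbr
    obtain ⟨t, ht⟩ := hCcomp.elim_finite_subcover (fun i : C => Metric.ball (i : Θ) (δf i))
      (fun i => Metric.isOpen_ball)
      (fun η hη => Set.mem_iUnion.mpr ⟨⟨η, hη⟩, Metric.mem_ball_self (hδpos ⟨η, hη⟩)⟩)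
    have htne : t.Nonempty := by
      have hw := ht hηwC
      rw [Set.mem_iUnion₂] at hw
      obtain ⟨i, hi, _⟩ := hw
      exact ⟨i, hi⟩
    set m : ℝ := t.inf' htne (fun i => -(∫ x, ψf i x ∂P₀)) with hmdef
    have hmpos : 0 < m := by
      rw [hmdef, Finset.lt_inf'_iff]
      intro i hi
      linarith [hψneg i]
    have hψlim : ∀ i ∈ t, ∫ x, ψf i x ∂P₀ ≤ -m := by
      intro i hi
      have h1 := Finset.inf'_le (fun i => -(∫ x, ψf i x ∂P₀)) hi
      rw [← hmdef] at h1
      linarith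
    obtain ⟨δ₀, hδ₀pos, hδ₀⟩ := aux_cont_at P₀ ℓd hjmld hcontP Gb hGbint hdomP η₀ h0ld
      (m/8) (by linarith)
    set B : Set Θ := Metric.ball η₀ δ₀ with hBdef
    have hBmeas : MeasurableSet B := Metric.isOpen_ball.measurableSet
    have hBpos : 0 < prior B := hprior δ₀ hδ₀pos
    set cB : ℝ := (prior B).toReal with hcBdef
    have hcBpos : 0 < cB := ENNReal.toReal_pos hBpos.ne' (measure_ne_top _ _)
    set gW : X → ℝ := fun x => cB⁻¹ * ∫ η in B, ℓd η x ∂prior with hgWdef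
    have hgWmeas : Measurable gW := by
      have h1 : StronglyMeasurable fun q : X × Θ => ℓd q.2 q.1 :=
        (hjmld.comp (measurable_snd.prodMk measurable_fst)).stronglyMeasurable
      exact measurable_const.mul h1.integral_prod_right'.measurable
    have hgWbound : ∀ᵐ x ∂P₀, ‖gW x‖ ≤ Gb x := by
      filter_upwards [hdomP] with x hx
      have hGbnn : 0 ≤ Gb x := le_trans (abs_nonneg _) (hx η₀)
      have h1 : ‖∫ η in B, ℓd η x ∂prior‖ ≤ ∫ _η in B, Gb x ∂prior := by
        apply norm_integral_le_of_norm_le (integrable_const _)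
        exact Eventually.of_forall fun η => by rw [Real.norm_eq_abs]; exact hx η
      rw [setIntegral_const, smul_eq_mul, Real.norm_eq_abs] at h1
      rw [Real.norm_eq_abs]
      simp only [hgWdef]
      rw [abs_mul, abs_inv, abs_of_pos hcBpos]
      calc cB⁻¹ * |∫ η in B, ℓd η x ∂prior| ≤ cB⁻¹ * (cB * Gb x) := by
            apply mul_le_mul_of_nonneg_left _ (le_of_lt (inv_pos.mpr hcBpos))
            rw [measureReal_def, ← hcBdef] at h1
            exact h1
        _ = Gb x := by field_simp
    have hgWint : Integrable gW P₀ :=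
      Integrable.mono' hGbint hgWmeas.aestronglyMeasurable hgWbound
    have hFubmeas : Measurable fun q : X × Θ => ℓd q.2 q.1 :=
      hjmld.comp (measurable_snd.prodMk measurable_fst)
    have hFubint : Integrable (fun q : X × Θ => ℓd q.2 q.1) (P₀.prod (prior.restrict B)) := by
      have hdomprod : ∀ᵐ q ∂(P₀.prod (prior.restrict B)), ∀ η : Θ, |ℓd η q.1| ≤ Gb q.1 :=
        Measure.quasiMeasurePreserving_fst.ae hdomP
      have hGbprod : Integrable (fun q : X × Θ => Gb q.1) (P₀.prod (prior.restrict B)) := by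
        have h1 : Integrable Gb (Measure.map Prod.fst (P₀.prod (prior.restrict B))) := by
          rw [Measure.map_fst_prod]
          exact hGbint.smul_measure (measure_ne_top _ _)
        exact (integrable_map_measure h1.aestronglyMeasurable measurable_fst.aemeasurable).mp h1
      refine Integrable.mono' hGbprod hFubmeas.aestronglyMeasurable ?_
      filter_upwards [hdomprod] with q hq
      rw [Real.norm_eq_abs]; exact hq q.2
    have hIνmeas : StronglyMeasurable fun η : Θ => ∫ x, ℓd η x ∂P₀ :=
      hjmld.stronglyMeasurable.integral_prod_right'
    have hIνint : Integrable (fun η : Θ => ∫ x, ℓd η x ∂P₀) (prior.restrict B) := by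
      refine Integrable.mono' (integrable_const (∫ x, Gb x ∂P₀))
        hIνmeas.aestronglyMeasurable ?_
      refine Eventually.of_forall fun η => ?_
      apply norm_integral_le_of_norm_le hGbint
      filter_upwards [hdomP] with x hx
      rw [Real.norm_eq_abs]; exact hx η
    have hgWmean : -(m/8) ≤ ∫ x, gW x ∂P₀ := by
      have hswap : ∫ x, (∫ η in B, ℓd η x ∂prior) ∂P₀
          = ∫ η in B, (∫ x, ℓd η x ∂P₀) ∂prior :=
        integral_integral_swap hFubint
      have h2 : ∫ x, gW x ∂P₀ = cB⁻¹ * ∫ η in B, (∫ x, ℓd η x ∂P₀) ∂prior := by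
        simp only [hgWdef]
        rw [integral_const_mul, hswap]
      rw [h2]
      have h3 : ∫ _η in B, (-(m/8)) ∂prior ≤ ∫ η in B, (∫ x, ℓd η x ∂P₀) ∂prior := by
        apply setIntegral_mono_on (integrable_const _) hIνint hBmeas
        intro η hη
        exact le_of_lt (hδ₀ η hη)
      rw [setIntegral_const, smul_eq_mul, measureReal_def, ← hcBdef] at h3
      calc -(m/8) = cB⁻¹ * (cB * (-(m/8))) := by field_simp
        _ ≤ cB⁻¹ * ∫ η in B, (∫ x, ℓd η x ∂P₀) ∂prior :=
            mul_le_mul_of_nonneg_left h3 (le_of_lt (inv_pos.mpr hcBpos))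
    have hslW : ∀ᵐ ω ∂μΩ, Tendsto
        (fun L : ℕ => (L : ℝ)⁻¹ * ∑ ℓ ∈ Finset.range L, gW (D ℓ ω))
        atTop (nhds (∫ x, gW x ∂P₀)) :=
      aux_slln μΩ P₀ D hDmeas hindep (fun ℓ => hid ℓ) gW hgWmeas hgWint
    have hslψ : ∀ᵐ ω ∂μΩ, ∀ i ∈ t, Tendsto
        (fun L : ℕ => (L : ℝ)⁻¹ * ∑ ℓ ∈ Finset.range L, ψf i (D ℓ ω))
        atTop (nhds (∫ x, ψf i x ∂P₀)) := by
      have h1 := (ae_ball_iff t.countable_toSet).mpr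
        (fun (i : ↑C) (_ : i ∈ (↑t : Set ↑C)) =>
          aux_slln μΩ P₀ D hDmeas hindep (fun ℓ => hid ℓ) (ψf i) (hψmeas i) (hψint i))
      filter_upwards [h1] with ω hω i hi
      exact hω i (Finset.mem_coe.mpr hi)
    have hgoodx : ∀ᵐ x ∂P₀, (∀ i ∈ t, ∀ η ∈ Metric.ball (i : Θ) (δf i), ℓd η x ≤ ψf i x)
        ∧ (∀ η : Θ, |ℓd η x| ≤ Gb x) := by
      refine Eventually.and ?_ hdomP
      have h1 := (ae_ball_iff t.countable_toSet).mpr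
        (fun (i : ↑C) (_ : i ∈ (↑t : Set ↑C)) => hψdom i)
      filter_upwards [h1] with x hx i hi
      exact hx i (Finset.mem_coe.mpr hi)
    have hgoodω : ∀ᵐ ω ∂μΩ, ∀ ℓ : ℕ,
        ((∀ i ∈ t, ∀ η ∈ Metric.ball (i : Θ) (δf i), ℓd η (D ℓ ω) ≤ ψf i (D ℓ ω))
          ∧ (∀ η : Θ, |ℓd η (D ℓ ω)| ≤ Gb (D ℓ ω))) := by
      rw [ae_all_iff]
      intro ℓ
      exact ae_of_ae_map (p := fun x : X =>
          (∀ i ∈ t, ∀ η ∈ Metric.ball (i : Θ) (δf i), ℓd η x ≤ ψf i x)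
            ∧ (∀ η : Θ, |ℓd η x| ≤ Gb x))
        (hDmeas ℓ).aemeasurable (by rw [hid ℓ]; exact hgoodx)
    have hmain : ∀ᵐ ω ∂μΩ, ∀ᶠ L : ℕ in atTop,
        ¬ (ENNReal.ofReal c ≤ posteriorMass p prior D L ω A) := by
      filter_upwards [hslW, hslψ, hgoodω] with ω hW hψ hgood
      have hev1 : ∀ᶠ L : ℕ in atTop, ∀ i ∈ t,
          (L : ℝ)⁻¹ * ∑ ℓ ∈ Finset.range L, ψf i (D ℓ ω) ≤ -(m/2) := by
        rw [eventually_all_finset]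
        intro i hi
        have hlt : ∫ x, ψf i x ∂P₀ < -(m/2) := by
          have := hψlim i hi; linarith
        exact ((hψ i hi).eventually_lt_const hlt).mono fun L h => le_of_lt h
      have hev2 : ∀ᶠ L : ℕ in atTop,
          -(m/4) ≤ (L : ℝ)⁻¹ * ∑ ℓ ∈ Finset.range L, gW (D ℓ ω) := by
        have hlt : -(m/4) < ∫ x, gW x ∂P₀ := by linarith
        exact (hW.eventually_const_lt hlt).mono fun L h => le_of_lt h
      have hev3 : ∀ᶠ L : ℕ in atTop, 1 ≤ L := eventually_ge_atTop 1
      have hev4 : ∀ᶠ L : ℕ in atTop, Real.exp ((L : ℝ) * (-(m/4))) / cB < c := by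
        have htz : Tendsto (fun L : ℕ => Real.exp ((L : ℝ) * (-(m/4))) / cB)
            atTop (nhds 0) := by
          have h2 : Tendsto (fun L : ℕ => (L : ℝ) * (-(m/4))) atTop atBot :=
            tendsto_natCast_atTop_atTop.atTop_mul_const_of_neg (by linarith)
          have h3 := Real.tendsto_exp_atBot.comp h2
          simpa using h3.div_const cB
        exact htz.eventually_lt_const hc
      filter_upwards [hev1, hev2, hev3, hev4] with L h1 h2 h3 h4
      rw [not_le]
      have hL0 : (0 : ℝ) < L := by exact_mod_cast h3
      set SL : ℝ := ∑ ℓ ∈ Finset.range L, Real.log (p η₀ (D ℓ ω)) with hSLdef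
      set bL : ℝ≥0∞ := ENNReal.ofReal (Real.exp SL) with hbLdef
      have hbL0 : bL ≠ 0 := by
        rw [hbLdef]; exact (ENNReal.ofReal_pos.mpr (Real.exp_pos _)).ne'
      have hbLtop : bL ≠ ⊤ := by rw [hbLdef]; exact ENNReal.ofReal_ne_top
      have hprodeq : ∀ η : Θ, (∏ ℓ ∈ Finset.range L, ENNReal.ofReal (p η (D ℓ ω)))
          = bL * ENNReal.ofReal (Real.exp (∑ ℓ ∈ Finset.range L, ℓd η (D ℓ ω))) := by
        intro η
        rw [← ENNReal.ofReal_prod_of_nonneg (fun ℓ _ => le_of_lt (hpos η _))]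
        rw [hbLdef, ← ENNReal.ofReal_mul (le_of_lt (Real.exp_pos _)), ← Real.exp_add]
        congr 1
        have he : ∀ ℓ ∈ Finset.range L, p η (D ℓ ω) = Real.exp (Real.log (p η (D ℓ ω))) :=
          fun ℓ _ => (Real.exp_log (hpos η _)).symm
        rw [Finset.prod_congr rfl he, ← Real.exp_sum]
        congr 1
        rw [hSLdef, ← Finset.sum_add_distrib]
        apply Finset.sum_congr rfl
        intro ℓ _
        simp only [hℓddef]
        ring
      have hAC : A ⊆ C := by
        intro η hη
        simp only [hAdef, Set.mem_setOf_eq] at hη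
        simp only [hCdef, Set.mem_setOf_eq]
        exact le_of_lt hη
      have hAmeas : MeasurableSet A :=
        (isOpen_lt continuous_const (continuous_id.dist continuous_const)).measurableSet
      have hnum : (∫⁻ η in A, ∏ ℓ ∈ Finset.range L, ENNReal.ofReal (p η (D ℓ ω)) ∂prior)
          ≤ bL * ENNReal.ofReal (Real.exp ((L : ℝ) * (-(m/2)))) := by
        have hpt : ∀ η ∈ A, (∏ ℓ ∈ Finset.range L, ENNReal.ofReal (p η (D ℓ ω)))
            ≤ bL * ENNReal.ofReal (Real.exp ((L : ℝ) * (-(m/2)))) := by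
          intro η hη
          obtain ⟨i, hi, hηball⟩ := Set.mem_iUnion₂.mp (ht (hAC hη))
          have hsum1 : ∑ ℓ ∈ Finset.range L, ℓd η (D ℓ ω)
              ≤ ∑ ℓ ∈ Finset.range L, ψf i (D ℓ ω) :=
            Finset.sum_le_sum fun ℓ _ => ((hgood ℓ).1 i hi η hηball)
          have h5 := h1 i hi
          have h6 : ∑ ℓ ∈ Finset.range L, ψf i (D ℓ ω) ≤ (L : ℝ) * (-(m/2)) := by
            have h7 := mul_le_mul_of_nonneg_left h5 (le_of_lt hL0)
            rwa [← mul_assoc, mul_inv_cancel₀ (ne_of_gt hL0), one_mul] at h7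
          rw [hprodeq η]
          exact mul_le_mul_right (ENNReal.ofReal_le_ofReal
            (Real.exp_le_exp.mpr (by linarith))) _
        calc (∫⁻ η in A, ∏ ℓ ∈ Finset.range L, ENNReal.ofReal (p η (D ℓ ω)) ∂prior)
            ≤ ∫⁻ _η in A, bL * ENNReal.ofReal (Real.exp ((L : ℝ) * (-(m/2)))) ∂prior := by
              apply lintegral_mono_ae
              rw [ae_restrict_iff' hAmeas]
              exact Eventually.of_forall hpt
          _ = bL * ENNReal.ofReal (Real.exp ((L : ℝ) * (-(m/2)))) * prior A :=
              setLIntegral_const _ _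
          _ ≤ bL * ENNReal.ofReal (Real.exp ((L : ℝ) * (-(m/2)))) * 1 :=
              mul_le_mul_right prob_le_one _
          _ = _ := mul_one _
      have hden : bL * ENNReal.ofReal (cB * Real.exp ((L : ℝ) * (-(m/4))))
          ≤ ∫⁻ η, ∏ ℓ ∈ Finset.range L, ENNReal.ofReal (p η (D ℓ ω)) ∂prior := by
        set f : Θ → ℝ := fun η => ∑ ℓ ∈ Finset.range L, ℓd η (D ℓ ω) with hfdef
        have hfmeas : Measurable f := by
          simp only [hfdef]
          exact Finset.measurable_sum _ fun ℓ _ =>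
            hjmld.comp (measurable_id.prodMk measurable_const)
        set R : ℝ := ∑ ℓ ∈ Finset.range L, Gb (D ℓ ω) with hRdef
        have hfbdd : ∀ η, |f η| ≤ R := by
          intro η
          refine (Finset.abs_sum_le_sum_abs _ _).trans ?_
          exact Finset.sum_le_sum fun ℓ _ => (hgood ℓ).2 η
        have hfint : Integrable f (prior.restrict B) := by
          refine Integrable.mono' (integrable_const R) hfmeas.aestronglyMeasurable ?_
          exact Eventually.of_forall fun η => by rw [Real.norm_eq_abs]; exact hfbdd η
        have hefint : Integrable (fun η => Real.exp (f η)) (prior.restrict B) := by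
          refine Integrable.mono' (integrable_const (Real.exp R))
            (Real.measurable_exp.comp hfmeas).aestronglyMeasurable ?_
          refine Eventually.of_forall fun η => ?_
          rw [Real.norm_eq_abs, abs_of_pos (Real.exp_pos _)]
          exact Real.exp_le_exp.mpr ((abs_le.mp (hfbdd η)).2)
        have hBuniv : (prior.restrict B) Set.univ = prior B := Measure.restrict_apply_univ _
        have hjensen := aux_jensen_exp (prior.restrict B) f hfint hefint
          (by rw [hBuniv]; exact hBpos.ne')
        rw [hBuniv, ← hcBdef] at hjensen
        have hldint' : ∀ ℓ : ℕ, Integrable (fun η => ℓd η (D ℓ ω)) (prior.restrict B) := by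
          intro ℓ
          refine Integrable.mono' (integrable_const (Gb (D ℓ ω)))
            ((hjmld.comp (measurable_id.prodMk measurable_const)).aestronglyMeasurable) ?_
          exact Eventually.of_forall fun η => by rw [Real.norm_eq_abs]; exact (hgood ℓ).2 η
        have hsumW : cB⁻¹ * ∫ η in B, f η ∂prior = ∑ ℓ ∈ Finset.range L, gW (D ℓ ω) := by
          simp only [hfdef, hgWdef]
          rw [integral_finset_sum _ (fun ℓ _ => hldint' ℓ), Finset.mul_sum]
        have hexpb : (L : ℝ) * (-(m/4)) ≤ cB⁻¹ * ∫ η in B, f η ∂prior := by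
          rw [hsumW]
          have h7 := mul_le_mul_of_nonneg_left h2 (le_of_lt hL0)
          rwa [← mul_assoc, mul_inv_cancel₀ (ne_of_gt hL0), one_mul] at h7
        have hch : ENNReal.ofReal (cB * Real.exp ((L : ℝ) * (-(m/4))))
            ≤ ∫⁻ η in B, ENNReal.ofReal (Real.exp (f η)) ∂prior := by
          rw [← ofReal_integral_eq_lintegral_ofReal hefint
            (Eventually.of_forall fun η => le_of_lt (Real.exp_pos _))]
          apply ENNReal.ofReal_le_ofReal
          calc cB * Real.exp ((L : ℝ) * (-(m/4)))
              ≤ cB * Real.exp (cB⁻¹ * ∫ η in B, f η ∂prior) :=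
                mul_le_mul_of_nonneg_left (Real.exp_le_exp.mpr hexpb) (le_of_lt hcBpos)
            _ ≤ ∫ η in B, Real.exp (f η) ∂prior := hjensen
        calc bL * ENNReal.ofReal (cB * Real.exp ((L : ℝ) * (-(m/4))))
            ≤ bL * ∫⁻ η in B, ENNReal.ofReal (Real.exp (f η)) ∂prior :=
              mul_le_mul_right hch _
          _ = ∫⁻ η in B, bL * ENNReal.ofReal (Real.exp (f η)) ∂prior :=
              (lintegral_const_mul bL
                (ENNReal.measurable_ofReal.comp (Real.measurable_exp.comp hfmeas))).symm
          _ = ∫⁻ η in B, ∏ ℓ ∈ Finset.range L, ENNReal.ofReal (p η (D ℓ ω)) ∂prior :=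
              lintegral_congr fun η => (hprodeq η).symm
          _ ≤ ∫⁻ η, ∏ ℓ ∈ Finset.range L, ENNReal.ofReal (p η (D ℓ ω)) ∂prior :=
              setLIntegral_le_lintegral _ _
      have hdiv : posteriorMass p prior D L ω A
          ≤ ENNReal.ofReal (Real.exp ((L : ℝ) * (-(m/4))) / cB) := by
        unfold posteriorMass
        refine le_trans (ENNReal.div_le_div hnum hden) ?_
        rw [ENNReal.mul_div_mul_left _ _ hbL0 hbLtop]
        rw [← ENNReal.ofReal_div_of_pos (by positivity)]
        apply ENNReal.ofReal_le_ofReal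
        have he : Real.exp ((L : ℝ) * (-(m/2)))
            = Real.exp ((L : ℝ) * (-(m/4))) * Real.exp ((L : ℝ) * (-(m/4))) := by
          rw [← Real.exp_add]; congr 1; ring
        rw [he, mul_comm cB _, mul_div_mul_left _ _ (ne_of_gt (Real.exp_pos _))]
      exact lt_of_le_of_lt hdiv ((ENNReal.ofReal_lt_ofReal_iff hc).mpr h4)
    -- conclude by dominated convergence
    have hpmmeas : ∀ L : ℕ, Measurable fun ω => posteriorMass p prior D L ω A := by
      intro L
      have hF : Measurable fun q : Ω × Θ =>
          ∏ ℓ ∈ Finset.range L, ENNReal.ofReal (p q.2 (D ℓ q.1)) := by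
        apply Finset.measurable_prod
        intro ℓ _
        exact ENNReal.measurable_ofReal.comp
          (hjm.comp (measurable_snd.prodMk ((hDmeas ℓ).comp measurable_fst)))
      have h1 : Measurable fun ω =>
          ∫⁻ η in A, ∏ ℓ ∈ Finset.range L, ENNReal.ofReal (p η (D ℓ ω)) ∂prior :=
        hF.lintegral_prod_right'
      have h2 : Measurable fun ω =>
          ∫⁻ η, ∏ ℓ ∈ Finset.range L, ENNReal.ofReal (p η (D ℓ ω)) ∂prior :=
        hF.lintegral_prod_right'
      exact h1.div h2
    have hsets : ∀ L : ℕ, MeasurableSet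
        {ω | ENNReal.ofReal c ≤ posteriorMass p prior D L ω A} :=
      fun L => measurableSet_le measurable_const (hpmmeas L)
    have heq : ∀ L : ℕ, μΩ {ω | ENNReal.ofReal c ≤ posteriorMass p prior D L ω A}
        = ∫⁻ ω, Set.indicator {ω | ENNReal.ofReal c ≤ posteriorMass p prior D L ω A}
            (fun _ => (1 : ℝ≥0∞)) ω ∂μΩ :=
      fun L => (lintegral_indicator_one (hsets L)).symm
    have htendsto : Tendsto (fun L : ℕ => ∫⁻ ω, Set.indicator
        {ω | ENNReal.ofReal c ≤ posteriorMass p prior D L ω A}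
        (fun _ => (1 : ℝ≥0∞)) ω ∂μΩ) atTop (nhds 0) := by
      have h0 : (0 : ℝ≥0∞) = ∫⁻ _ω, (0 : ℝ≥0∞) ∂μΩ := by simp
      rw [h0]
      apply tendsto_lintegral_of_dominated_convergence (fun _ => (1 : ℝ≥0∞))
      · intro L; exact measurable_const.indicator (hsets L)
      · intro L
        refine Eventually.of_forall fun ω => ?_
        by_cases hmem : ω ∈ {ω | ENNReal.ofReal c ≤ posteriorMass p prior D L ω A}
        · rw [Set.indicator_of_mem hmem]
        · rw [Set.indicator_of_notMem hmem]; exact zero_le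
      · simp
      · filter_upwards [hmain] with ω hω
        have hzz : ∀ᶠ L : ℕ in atTop, Set.indicator
            {ω' | ENNReal.ofReal c ≤ posteriorMass p prior D L ω' A}
            (fun _ => (1 : ℝ≥0∞)) ω = 0 := by
          filter_upwards [hω] with L hL
          have hL' : ω ∉ {ω' | ENNReal.ofReal c ≤ posteriorMass p prior D L ω' A} := hL
          exact Set.indicator_of_notMem hL' _
        exact Tendsto.congr' (hzz.mono fun L h => h.symm) tendsto_const_nhds
    exact (htendsto.congr fun L => (heq L).symm)
  · -- trivial case: the alternative set is empty
    push_neg at hCne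
    have hAempty : A = ∅ := by
      ext η
      simp only [hAdef, Set.mem_setOf_eq, Set.mem_empty_iff_false, iff_false, not_lt]
      exact le_of_lt (hCne η)
    have hzero : ∀ (L : ℕ) (ω : Ω), posteriorMass p prior D L ω A = 0 := by
      intro L ω
      unfold posteriorMass
      rw [hAempty]
      simp [Measure.restrict_empty]
    have hsets : ∀ L : ℕ, {ω | ENNReal.ofReal c ≤ posteriorMass p prior D L ω A} = ∅ := by
      intro L
      ext ω
      simp only [Set.mem_setOf_eq, hzero, Set.mem_empty_iff_false, iff_false, not_le]
      exact ENNReal.ofReal_pos.mpr hc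
    simp only [hsets, measure_empty]
    exact tendsto_const_nhds
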